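/- In the universal enveloping algebra of sl(3,ℂ) (with generators the elementary matrices E_{ij}, 1 ≤ i,j ≤ 3, i ≠ j, together with H₁ = E₁₁−E₂₂ and H₂ = E₂₂−E₃₃, satisfying [E_{ij},E_{kl}] = δ_{jk}E_{il} − δ_{li}E_{kj}), the elements B₁ = E₁₃, B₂ = 3E₁₂E₂₃ + (H₁−H₂)E₁₃, and C₁ = E₃₂E₁₃² − E₂₃E₁₂² + H₂E₁₂E₁₃ satisfy the commutation relation [B₂, C₁] = 3 B₁ C₁. -/

import Mathlib

open LieAlgebra.SpecialLinear

attribute [local instance] LieRing.ofAssociativeRing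

/-- E₁₂ as an element of sl(3,ℂ). -/
noncomputable def slE₁₂ : sl (Fin 3) ℂ := single 0 1 (by decide) (1 : ℂ)

/-- E₂₃ as an element of sl(3,ℂ). -/
noncomputable def slE₂₃ : sl (Fin 3) ℂ := single 1 2 (by decide) (1 : ℂ)

/-- E₁₃ as an element of sl(3,ℂ). -/
noncomputable def slE₁₃ : sl (Fin 3) ℂ := single 0 2 (by decide) (1 : ℂ)

/-- E₂₃' := E₃₂ as an element of sl(3,ℂ). -/
noncomputable def slE₃₂ : sl (Fin 3) ℂ := single 2 1 (by decide) (1 : ℂ)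

/-- H₁ = E₁₁ − E₂₂ as an element of sl(3,ℂ). -/
noncomputable def slH₁ : sl (Fin 3) ℂ :=
  ⟨Matrix.single 0 0 1 - Matrix.single 1 1 1, by
    show _ ∈ LinearMap.ker (Matrix.traceLinearMap (Fin 3) ℂ ℂ)
    simp⟩

/-- H₂ = E₂₂ − E₃₃ as an element of sl(3,ℂ). -/
noncomputable def slH₂ : sl (Fin 3) ℂ :=
  ⟨Matrix.single 1 1 1 - Matrix.single 2 2 1, by
    show _ ∈ LinearMap.ker (Matrix.traceLinearMap (Fin 3) ℂ ℂ)
    simp⟩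

private lemma swapw {R : Type*} [Ring R] {x y w : R} (h : y*x = x*y + w) (t : R) :
    y*(x*t) = x*(y*t) + w*t := by
  rw [← mul_assoc, h, add_mul, mul_assoc]

private lemma swapc {R : Type*} [Ring R] {x y : R} (h : y*x = x*y) (t : R) :
    y*(x*t) = x*(y*t) := by
  rw [← mul_assoc, h, mul_assoc]

private lemma key {R : Type*} [Ring R] (A B C D H1 H2 : R)
    (hba : B*A = A*B + (-C))
    (hca : C*A = A*C)
    (hcb : C*B = B*C)
    (hda : D*A = A*D)
    (hdb : D*B = B*D + (-H2))
    (hdc : D*C = C*D + (-A))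
    (h1a : H1*A = A*H1 + (A+A))
    (h1b : H1*B = B*H1 + (-B))
    (h1c : H1*C = C*H1 + C)
    (h1d : H1*D = D*H1 + D)
    (h2a : H2*A = A*H2 + (-A))
    (h2b : H2*B = B*H2 + (B+B))
    (h2c : H2*C = C*H2 + C)
    (h2d : H2*D = D*H2 + (-(D+D)))
    (h21 : H2*H1 = H1*H2) :
    (3*(A*B) + (H1 - H2)*C) * (D*(C*C) - B*(A*A) + H2*(A*C))
      - (D*(C*C) - B*(A*A) + H2*(A*C)) * (3*(A*B) + (H1 - H2)*C)
      = 3 * (C * (D*(C*C) - B*(A*A) + H2*(A*C))) := by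
  have h3 : ∀ x : R, (3:R)*x = x+x+x := by
    intro x
    rw [show (3:R) = 1+1+1 by norm_num, add_mul, add_mul, one_mul]
  simp only [h3, sub_eq_add_neg, mul_add, add_mul, mul_neg, neg_mul, neg_neg, neg_add,
    mul_assoc,
    hba, swapw hba, hca, swapc hca, hcb, swapc hcb, hda, swapc hda,
    hdb, swapw hdb, hdc, swapw hdc, h1a, swapw h1a, h1b, swapw h1b,
    h1c, swapw h1c, h1d, swapw h1d, h2a, swapw h2a, h2b, swapw h2b,
    h2c, swapw h2c, h2d, swapw h2d, h21, swapc h21]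
  abel

private lemma uea_comm (x y z : sl (Fin 3) ℂ) (h : ⁅x, y⁆ = z) :
    UniversalEnvelopingAlgebra.ι ℂ x * UniversalEnvelopingAlgebra.ι ℂ y
      = UniversalEnvelopingAlgebra.ι ℂ y * UniversalEnvelopingAlgebra.ι ℂ x
        + UniversalEnvelopingAlgebra.ι ℂ z := by
  have h2 := (UniversalEnvelopingAlgebra.ι ℂ).map_lie x y
  rw [h, Ring.lie_def] at h2
  rw [h2]; abel

private lemma uea_comm0 (x y : sl (Fin 3) ℂ) (h : ⁅x, y⁆ = 0) :
    UniversalEnvelopingAlgebra.ι ℂ x * UniversalEnvelopingAlgebra.ι ℂ y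
      = UniversalEnvelopingAlgebra.ι ℂ y * UniversalEnvelopingAlgebra.ι ℂ x := by
  have := uea_comm x y 0 h
  simpa using this

-- bracket computations in sl(3,ℂ)
private lemma br_ba : ⁅slE₂₃, slE₁₂⁆ = -slE₁₃ := by
  apply Subtype.ext
  show _ = _
  ext i j
  fin_cases i <;> fin_cases j <;>
    simp [slE₂₃, slE₁₂, slE₁₃, Ring.lie_def, Matrix.sub_apply, Matrix.mul_apply, Matrix.single, val_single, Matrix.single_apply,
      Fin.sum_univ_three]

private lemma br_ca : ⁅slE₁₃, slE₁₂⁆ = 0 := by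
  apply Subtype.ext
  show _ = _
  ext i j
  fin_cases i <;> fin_cases j <;>
    simp [slE₁₂, slE₂₃, slE₁₃, slE₃₂, slH₁, slH₂, Ring.lie_def, Matrix.sub_apply, Matrix.mul_apply, Matrix.single, val_single, Matrix.single_apply, Fin.sum_univ_three, Matrix.add_apply, Matrix.neg_apply, sub_eq_add_neg]

private lemma br_cb : ⁅slE₁₃, slE₂₃⁆ = 0 := by
  apply Subtype.ext
  show _ = _
  ext i j
  fin_cases i <;> fin_cases j <;>
    simp [slE₁₂, slE₂₃, slE₁₃, slE₃₂, slH₁, slH₂, Ring.lie_def, Matrix.sub_apply, Matrix.mul_apply, Matrix.single, val_single, Matrix.single_apply, Fin.sum_univ_three, Matrix.add_apply, Matrix.neg_apply, sub_eq_add_neg]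

private lemma br_da : ⁅slE₃₂, slE₁₂⁆ = 0 := by
  apply Subtype.ext
  show _ = _
  ext i j
  fin_cases i <;> fin_cases j <;>
    simp [slE₁₂, slE₂₃, slE₁₃, slE₃₂, slH₁, slH₂, Ring.lie_def, Matrix.sub_apply, Matrix.mul_apply, Matrix.single, val_single, Matrix.single_apply, Fin.sum_univ_three, Matrix.add_apply, Matrix.neg_apply, sub_eq_add_neg]

private lemma br_db : ⁅slE₃₂, slE₂₃⁆ = -slH₂ := by
  apply Subtype.ext
  show _ = _
  ext i j
  fin_cases i <;> fin_cases j <;>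
    simp [slE₁₂, slE₂₃, slE₁₃, slE₃₂, slH₁, slH₂, Ring.lie_def, Matrix.sub_apply, Matrix.mul_apply, Matrix.single, val_single, Matrix.single_apply, Fin.sum_univ_three, Matrix.add_apply, Matrix.neg_apply, sub_eq_add_neg]

private lemma br_dc : ⁅slE₃₂, slE₁₃⁆ = -slE₁₂ := by
  apply Subtype.ext
  show _ = _
  ext i j
  fin_cases i <;> fin_cases j <;>
    simp [slE₁₂, slE₂₃, slE₁₃, slE₃₂, slH₁, slH₂, Ring.lie_def, Matrix.sub_apply, Matrix.mul_apply, Matrix.single, val_single, Matrix.single_apply, Fin.sum_univ_three, Matrix.add_apply, Matrix.neg_apply, sub_eq_add_neg]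

private lemma br_1a : ⁅slH₁, slE₁₂⁆ = slE₁₂ + slE₁₂ := by
  apply Subtype.ext
  show _ = _
  ext i j
  fin_cases i <;> fin_cases j <;>
    simp [slE₁₂, slE₂₃, slE₁₃, slE₃₂, slH₁, slH₂, Ring.lie_def, Matrix.sub_apply, Matrix.mul_apply, Matrix.single, val_single, Matrix.single_apply, Fin.sum_univ_three, Matrix.add_apply, Matrix.neg_apply, sub_eq_add_neg]

private lemma br_1b : ⁅slH₁, slE₂₃⁆ = -slE₂₃ := by
  apply Subtype.ext
  show _ = _
  ext i j
  fin_cases i <;> fin_cases j <;>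
    simp [slE₁₂, slE₂₃, slE₁₃, slE₃₂, slH₁, slH₂, Ring.lie_def, Matrix.sub_apply, Matrix.mul_apply, Matrix.single, val_single, Matrix.single_apply, Fin.sum_univ_three, Matrix.add_apply, Matrix.neg_apply, sub_eq_add_neg]

private lemma br_1c : ⁅slH₁, slE₁₃⁆ = slE₁₃ := by
  apply Subtype.ext
  show _ = _
  ext i j
  fin_cases i <;> fin_cases j <;>
    simp [slE₁₂, slE₂₃, slE₁₃, slE₃₂, slH₁, slH₂, Ring.lie_def, Matrix.sub_apply, Matrix.mul_apply, Matrix.single, val_single, Matrix.single_apply, Fin.sum_univ_three, Matrix.add_apply, Matrix.neg_apply, sub_eq_add_neg]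

private lemma br_1d : ⁅slH₁, slE₃₂⁆ = slE₃₂ := by
  apply Subtype.ext
  show _ = _
  ext i j
  fin_cases i <;> fin_cases j <;>
    simp [slE₁₂, slE₂₃, slE₁₃, slE₃₂, slH₁, slH₂, Ring.lie_def, Matrix.sub_apply, Matrix.mul_apply, Matrix.single, val_single, Matrix.single_apply, Fin.sum_univ_three, Matrix.add_apply, Matrix.neg_apply, sub_eq_add_neg]

private lemma br_2a : ⁅slH₂, slE₁₂⁆ = -slE₁₂ := by
  apply Subtype.ext
  show _ = _
  ext i j
  fin_cases i <;> fin_cases j <;>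
    simp [slE₁₂, slE₂₃, slE₁₃, slE₃₂, slH₁, slH₂, Ring.lie_def, Matrix.sub_apply, Matrix.mul_apply, Matrix.single, val_single, Matrix.single_apply, Fin.sum_univ_three, Matrix.add_apply, Matrix.neg_apply, sub_eq_add_neg]

private lemma br_2b : ⁅slH₂, slE₂₃⁆ = slE₂₃ + slE₂₃ := by
  apply Subtype.ext
  show _ = _
  ext i j
  fin_cases i <;> fin_cases j <;>
    simp [slE₁₂, slE₂₃, slE₁₃, slE₃₂, slH₁, slH₂, Ring.lie_def, Matrix.sub_apply, Matrix.mul_apply, Matrix.single, val_single, Matrix.single_apply, Fin.sum_univ_three, Matrix.add_apply, Matrix.neg_apply, sub_eq_add_neg]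

private lemma br_2c : ⁅slH₂, slE₁₃⁆ = slE₁₃ := by
  apply Subtype.ext
  show _ = _
  ext i j
  fin_cases i <;> fin_cases j <;>
    simp [slE₁₂, slE₂₃, slE₁₃, slE₃₂, slH₁, slH₂, Ring.lie_def, Matrix.sub_apply, Matrix.mul_apply, Matrix.single, val_single, Matrix.single_apply, Fin.sum_univ_three, Matrix.add_apply, Matrix.neg_apply, sub_eq_add_neg]

private lemma br_2d : ⁅slH₂, slE₃₂⁆ = -(slE₃₂ + slE₃₂) := by
  apply Subtype.ext
  show _ = _
  ext i j
  fin_cases i <;> fin_cases j <;>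
    simp [slE₁₂, slE₂₃, slE₁₃, slE₃₂, slH₁, slH₂, Ring.lie_def, Matrix.sub_apply, Matrix.mul_apply, Matrix.single, val_single, Matrix.single_apply, Fin.sum_univ_three, Matrix.add_apply, Matrix.neg_apply, sub_eq_add_neg]

private lemma br_21 : ⁅slH₂, slH₁⁆ = 0 := by
  apply Subtype.ext
  show _ = _
  ext i j
  fin_cases i <;> fin_cases j <;>
    simp [slE₁₂, slE₂₃, slE₁₃, slE₃₂, slH₁, slH₂, Ring.lie_def, Matrix.sub_apply, Matrix.mul_apply, Matrix.single, val_single, Matrix.single_apply, Fin.sum_univ_three, Matrix.add_apply, Matrix.neg_apply, sub_eq_add_neg]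

theorem B2_C1_commutator :
    let ι : sl (Fin 3) ℂ →ₗ⁅ℂ⁆ UniversalEnvelopingAlgebra ℂ (sl (Fin 3) ℂ) :=
      UniversalEnvelopingAlgebra.ι ℂ
    let B₁ := ι slE₁₃
    let B₂ := 3 * (ι slE₁₂ * ι slE₂₃) + (ι slH₁ - ι slH₂) * ι slE₁₃
    let C₁ := ι slE₃₂ * (ι slE₁₃ * ι slE₁₃) - ι slE₂₃ * (ι slE₁₂ * ι slE₁₂) +
      ι slH₂ * (ι slE₁₂ * ι slE₁₃)
    B₂ * C₁ - C₁ * B₂ = 3 * (B₁ * C₁) := by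
  intro ι B₁ B₂ C₁
  exact key (ι slE₁₂) (ι slE₂₃) (ι slE₁₃) (ι slE₃₂) (ι slH₁) (ι slH₂)
    (by have h := uea_comm _ _ _ br_ba; rwa [map_neg] at h)
    (uea_comm0 _ _ br_ca)
    (uea_comm0 _ _ br_cb)
    (uea_comm0 _ _ br_da)
    (by have h := uea_comm _ _ _ br_db; rwa [map_neg] at h)
    (by have h := uea_comm _ _ _ br_dc; rwa [map_neg] at h)
    (by have h := uea_comm _ _ _ br_1a; rwa [map_add] at h)
    (by have h := uea_comm _ _ _ br_1b; rwa [map_neg] at h)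
    (uea_comm _ _ _ br_1c)
    (uea_comm _ _ _ br_1d)
    (by have h := uea_comm _ _ _ br_2a; rwa [map_neg] at h)
    (by have h := uea_comm _ _ _ br_2b; rwa [map_add] at h)
    (uea_comm _ _ _ br_2c)
    (by have h := uea_comm _ _ _ br_2d; rwa [map_neg, map_add] at h)
    (uea_comm0 _ _ br_21)
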